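/- Let M be an ε-locally differentially private mechanism, k ≥ 4, and let the prior on X induce a distribution on V = f_A(X) ∈ S^{k-1} whose density with respect to the uniform measure on S^{k-1} is at most e^{ρ₀}. Then for every estimator v̂ and every output z, and for a ∈ [0, 1/√2], P(‖V - v̂(z)/‖v̂(z)‖₂‖₂ ≤ √(2 - 2a) | M = z) ≤ exp(ε + ρ₀ + (k/2) log(1 - a²)). -/

import Mathlib

open MeasureTheory Real Classical
open scoped ENNReal

/-- The uniform probability measure on the unit sphere `S^{k-1} ⊂ ℝ^k`. -/
noncomputable def uniformSphere (k : ℕ) :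
    Measure (Metric.sphere (0 : EuclideanSpace ℝ (Fin k)) 1) :=
  ((volume : Measure (EuclideanSpace ℝ (Fin k))).toSphere Set.univ)⁻¹ •
    (volume : Measure (EuclideanSpace ℝ (Fin k))).toSphere

/-- The reconstruction loss `L(u,v) = ‖u - v/‖v‖‖₂`, set to `√2` when `v = 0`. -/

noncomputable def Lrec {k : ℕ} (u v : EuclideanSpace ℝ (Fin k)) : ℝ :=
  if v = 0 then Real.sqrt 2 else ‖u - ‖v‖⁻¹ • v‖


section Aux
open scoped Pointwise RealInnerProductSpace
lemma toSphere_univ_ne_zero (hk : 0 < k) :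
    (volume : Measure (EuclideanSpace ℝ (Fin k))).toSphere Set.univ ≠ 0 := by
  haveI : Nonempty (Fin k) := ⟨⟨0, hk⟩⟩
  rw [Measure.toSphere_apply_univ, finrank_euclideanSpace_fin]
  simp only [ne_eq, mul_eq_zero, not_or]
  exact ⟨by exact_mod_cast hk.ne', (Metric.measure_ball_pos _ _ one_pos).ne'⟩

lemma toSphere_univ_ne_top :
    (volume : Measure (EuclideanSpace ℝ (Fin k))).toSphere Set.univ ≠ ⊤ :=
  (measure_lt_top _ _).ne

lemma uniformSphere_univ (hk : 0 < k) : uniformSphere k Set.univ = 1 := by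
  rw [uniformSphere, Measure.smul_apply, smul_eq_mul,
    ENNReal.inv_mul_cancel (toSphere_univ_ne_zero hk) toSphere_univ_ne_top]

lemma uniformSphere_cap_le (hk : 0 < k) (w : EuclideanSpace ℝ (Fin k)) (hw : ‖w‖ = 1)
    (a : ℝ) (ha0 : 0 ≤ a) (ha2 : a ^ 2 ≤ 1 / 2) :
    uniformSphere k {u : Metric.sphere (0 : EuclideanSpace ℝ (Fin k)) 1 |
        ‖(u : EuclideanSpace ℝ (Fin k)) - w‖ ≤ Real.sqrt (2 - 2 * a)}
      ≤ ENNReal.ofReal ((1 - a ^ 2) ^ ((k : ℝ) / 2)) := by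
  haveI : Nonempty (Fin k) := ⟨⟨0, hk⟩⟩
  set s : Set (Metric.sphere (0 : EuclideanSpace ℝ (Fin k)) 1) :=
    {u : Metric.sphere (0 : EuclideanSpace ℝ (Fin k)) 1 |
      ‖(u : EuclideanSpace ℝ (Fin k)) - w‖ ≤ Real.sqrt (2 - 2 * a)} with hs_def
  have ht : 0 < 1 - a ^ 2 := by nlinarith
  have hs : MeasurableSet s :=
    (isClosed_le (by fun_prop) continuous_const).measurableSet
  have hsub : Set.Ioo (0 : ℝ) 1 • (Subtype.val '' s)
      ⊆ Metric.closedBall (a • w) (Real.sqrt (1 - a ^ 2)) := by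
    rintro x ⟨r, hr, y, ⟨u, hu, rfl⟩, rfl⟩
    have hy1 : ‖(u : EuclideanSpace ℝ (Fin k))‖ = 1 := by
      simpa using mem_sphere_zero_iff_norm.mp u.2
    have hinner : a ≤ ⟪(u : EuclideanSpace ℝ (Fin k)), w⟫ := by
      have h2a : 0 ≤ 2 - 2 * a := by nlinarith
      have hu' : ‖(u : EuclideanSpace ℝ (Fin k)) - w‖ ≤ Real.sqrt (2 - 2 * a) := hu
      have h1 : ‖(u : EuclideanSpace ℝ (Fin k)) - w‖ ^ 2 ≤ 2 - 2 * a := by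
        have h := mul_le_mul hu' hu' (norm_nonneg _) (Real.sqrt_nonneg _)
        rw [Real.mul_self_sqrt h2a] at h
        nlinarith [h]
      rw [norm_sub_sq_real, hy1, hw] at h1
      linarith
    have hrn : ‖r • (u : EuclideanSpace ℝ (Fin k)) - a • w‖ ^ 2
        = r ^ 2 - 2 * (r * a) * ⟪(u : EuclideanSpace ℝ (Fin k)), w⟫ + a ^ 2 := by
      rw [norm_sub_sq_real, real_inner_smul_left, real_inner_smul_right,
        norm_smul, norm_smul, hy1, hw]
      simp only [Real.norm_eq_abs, abs_of_pos hr.1, abs_of_nonneg ha0]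
      ring
    have hb : ‖r • (u : EuclideanSpace ℝ (Fin k)) - a • w‖ ^ 2 ≤ 1 - a ^ 2 := by
      rw [hrn]
      have h1 : r * a * a ≤ r * a * ⟪(u : EuclideanSpace ℝ (Fin k)), w⟫ :=
        mul_le_mul_of_nonneg_left hinner (mul_nonneg hr.1.le ha0)
      nlinarith [hr.1, hr.2, mul_nonneg (sub_nonneg.2 hr.2.le)
        (by nlinarith [hr.1] : (0:ℝ) ≤ 1 + r - 2 * a ^ 2)]
    rw [Metric.mem_closedBall, dist_eq_norm]
    exact (Real.le_sqrt (norm_nonneg _) ht.le).mpr hb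
  have hdim : Module.finrank ℝ (EuclideanSpace ℝ (Fin k)) = k := finrank_euclideanSpace_fin
  have hpow : (Real.sqrt (1 - a ^ 2)) ^ k = (1 - a ^ 2) ^ ((k : ℝ) / 2) := by
    rw [← Real.rpow_natCast (Real.sqrt (1 - a ^ 2)) k, Real.sqrt_eq_rpow,
      ← Real.rpow_mul ht.le]
    ring_nf
  have hmeas : (volume : Measure (EuclideanSpace ℝ (Fin k)))
        (Set.Ioo (0:ℝ) 1 • (Subtype.val '' s))
      ≤ ENNReal.ofReal ((1 - a ^ 2) ^ ((k : ℝ) / 2))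
        * volume (Metric.ball (0 : EuclideanSpace ℝ (Fin k)) 1) := by
    calc (volume : Measure (EuclideanSpace ℝ (Fin k))) (Set.Ioo (0:ℝ) 1 • (Subtype.val '' s))
        ≤ volume (Metric.closedBall (a • w) (Real.sqrt (1 - a ^ 2))) := measure_mono hsub
      _ = ENNReal.ofReal ((1 - a ^ 2) ^ ((k : ℝ) / 2))
          * volume (Metric.ball (0 : EuclideanSpace ℝ (Fin k)) 1) := by
          rw [Measure.addHaar_closedBall _ _ (Real.sqrt_nonneg _), hdim, hpow]
  rw [uniformSphere, Measure.smul_apply, smul_eq_mul,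
    ENNReal.inv_mul_le_iff (toSphere_univ_ne_zero hk) toSphere_univ_ne_top,
    Measure.toSphere_apply' _ hs, Measure.toSphere_apply_univ, hdim]
  calc (k : ℝ≥0∞) * volume (Set.Ioo (0:ℝ) 1 • (Subtype.val '' s))
      ≤ (k : ℝ≥0∞) * (ENNReal.ofReal ((1 - a ^ 2) ^ ((k : ℝ) / 2))
          * volume (Metric.ball (0 : EuclideanSpace ℝ (Fin k)) 1)) :=
        mul_le_mul_right hmeas _
    _ = (k : ℝ≥0∞) * volume (Metric.ball (0 : EuclideanSpace ℝ (Fin k)) 1)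
        * ENNReal.ofReal ((1 - a ^ 2) ^ ((k : ℝ) / 2)) := by ring

end Aux

/-- protection against reconstruction of `V = f(X) ∈ S^{k-1}` under an ε-locally
differentially private mechanism with density `g`, when the prior of `V` has density at most
`e^{ρ₀}` w.r.t. the uniform measure on `S^{k-1}`.  The posterior probability
`P(‖V - v̂(z)/‖v̂(z)‖‖ ≤ √(2-2a) | M = z)` is given by Bayes' rule as a ratio of integrals. -/
theorem reconstruction_breach_bound
    {X Z : Type*} [MeasurableSpace X] [MeasurableSpace Z]
    (k : ℕ) (hk : 4 ≤ k)
    (pri : Measure X) [IsProbabilityMeasure pri] (ρ₀ : ℝ)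
    (f : X → Metric.sphere (0 : EuclideanSpace ℝ (Fin k)) 1) (hf : Measurable f)
    (hdens : ∀ s : Set (Metric.sphere (0 : EuclideanSpace ℝ (Fin k)) 1), MeasurableSet s →
      pri (f ⁻¹' s) ≤ ENNReal.ofReal (exp ρ₀) * uniformSphere k s)
    (g : X → Z → ℝ≥0∞) (ε : ℝ)
    (hDP : ∀ x x' : X, ∀ z : Z, g x z ≤ ENNReal.ofReal (exp ε) * g x' z)
    (vhat : Z → EuclideanSpace ℝ (Fin k)) (z : Z)
    (hz : 0 < ∫⁻ x, g x z ∂pri) (hz' : (∫⁻ x, g x z ∂pri) ≠ ⊤)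
    (a : ℝ) (ha0 : 0 ≤ a) (ha : a ≤ 1 / Real.sqrt 2) :
    (∫⁻ x in {x | Lrec ((f x : EuclideanSpace ℝ (Fin k))) (vhat z) ≤ Real.sqrt (2 - 2 * a)},
        g x z ∂pri) / (∫⁻ x, g x z ∂pri)
      ≤ ENNReal.ofReal (exp (ε + ρ₀ + ((k : ℝ) / 2) * Real.log (1 - a ^ 2))) := by
  have hk0 : 0 < k := by omega
  -- `a ^ 2 ≤ 1/2`
  have hs2 : Real.sqrt 2 ^ 2 = 2 := Real.sq_sqrt (by norm_num)
  have hs2pos : 0 < Real.sqrt 2 := Real.sqrt_pos.mpr (by norm_num)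
  have ha2 : a ^ 2 ≤ 1 / 2 := by
    have h1 : a * Real.sqrt 2 ≤ 1 := by
      rw [div_eq_inv_mul, mul_one] at ha
      calc a * Real.sqrt 2 ≤ (Real.sqrt 2)⁻¹ * Real.sqrt 2 :=
            mul_le_mul_of_nonneg_right ha hs2pos.le
        _ = 1 := inv_mul_cancel₀ hs2pos.ne'
    nlinarith [mul_le_mul h1 h1 (mul_nonneg ha0 hs2pos.le) zero_le_one]
  have ht : 0 < 1 - a ^ 2 := by nlinarith
  set s : Set (Metric.sphere (0 : EuclideanSpace ℝ (Fin k)) 1) :=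
    {u : Metric.sphere (0 : EuclideanSpace ℝ (Fin k)) 1 |
      Lrec ((u : EuclideanSpace ℝ (Fin k))) (vhat z) ≤ Real.sqrt (2 - 2 * a)} with hs_def
  -- measurability of `s`
  have hsm : MeasurableSet s := by
    by_cases hv : vhat z = 0
    · simp only [hs_def, Lrec, if_pos hv]
      exact MeasurableSet.const _
    · simp only [hs_def, Lrec, if_neg hv]
      exact (isClosed_le (by fun_prop) continuous_const).measurableSet
  -- the cap bound
  have hσ : uniformSphere k s ≤ ENNReal.ofReal ((1 - a ^ 2) ^ ((k : ℝ) / 2)) := by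
    by_cases hv : vhat z = 0
    · by_cases h2 : Real.sqrt 2 ≤ Real.sqrt (2 - 2 * a)
      · have haz : a = 0 := by
          have h3 := (Real.le_sqrt' hs2pos).mp h2
          rw [hs2] at h3
          linarith
        have hsu : s = Set.univ := by
          ext u; simp [hs_def, Lrec, if_pos hv, h2]
        rw [hsu, uniformSphere_univ hk0, haz]
        simp
      · have hse : s = ∅ := by
          ext u; simp [hs_def, Lrec, if_pos hv, h2]
        simp [hse]
    · have hseq : s = {u : Metric.sphere (0 : EuclideanSpace ℝ (Fin k)) 1 |
          ‖(u : EuclideanSpace ℝ (Fin k)) - ‖vhat z‖⁻¹ • vhat z‖ ≤ Real.sqrt (2 - 2 * a)} := by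
        ext u; simp [hs_def, Lrec, if_neg hv]
      rw [hseq]
      exact uniformSphere_cap_le hk0 _ (norm_smul_inv_norm hv) a ha0 ha2
  -- the Bayes-type bound on the ratio
  have hS : {x | Lrec ((f x : EuclideanSpace ℝ (Fin k))) (vhat z) ≤ Real.sqrt (2 - 2 * a)}
      = f ⁻¹' s := rfl
  set c₀ : ℝ≥0∞ := ENNReal.ofReal (exp ε) * pri (f ⁻¹' s) with hc₀
  have key : ∀ x' : X, (∫⁻ x in f ⁻¹' s, g x z ∂pri) ≤ c₀ * g x' z := by
    intro x'
    calc (∫⁻ x in f ⁻¹' s, g x z ∂pri)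
        ≤ ∫⁻ _x in f ⁻¹' s, ENNReal.ofReal (exp ε) * g x' z ∂pri :=
          lintegral_mono fun x => hDP x x' z
      _ = ENNReal.ofReal (exp ε) * g x' z * pri (f ⁻¹' s) := setLIntegral_const _ _
      _ = c₀ * g x' z := by rw [hc₀]; ring
  have hc₀top : c₀ ≠ ⊤ :=
    ENNReal.mul_ne_top ENNReal.ofReal_ne_top (measure_ne_top pri _)
  have hnum : (∫⁻ x in f ⁻¹' s, g x z ∂pri) ≤ c₀ * ∫⁻ x, g x z ∂pri := by
    have h1 : (∫⁻ x in f ⁻¹' s, g x z ∂pri)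
        = ∫⁻ _x', (∫⁻ x in f ⁻¹' s, g x z ∂pri) ∂pri := by
      rw [lintegral_const, measure_univ, mul_one]
    rw [h1]
    calc (∫⁻ x', (∫⁻ x in f ⁻¹' s, g x z ∂pri) ∂pri)
        ≤ ∫⁻ x', c₀ * g x' z ∂pri := lintegral_mono key
      _ = c₀ * ∫⁻ x', g x' z ∂pri := lintegral_const_mul' _ _ hc₀top
  -- assemble
  have hrhs : ENNReal.ofReal (exp (ε + ρ₀ + ((k : ℝ) / 2) * Real.log (1 - a ^ 2)))
      = ENNReal.ofReal (exp ε)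
        * (ENNReal.ofReal (exp ρ₀) * ENNReal.ofReal ((1 - a ^ 2) ^ ((k : ℝ) / 2))) := by
    have h1 : exp (ε + ρ₀ + ((k : ℝ) / 2) * Real.log (1 - a ^ 2))
        = exp ε * (exp ρ₀ * (1 - a ^ 2) ^ ((k : ℝ) / 2)) := by
      rw [Real.rpow_def_of_pos ht, ← Real.exp_add, ← Real.exp_add]
      congr 1; ring
    rw [h1, ENNReal.ofReal_mul (exp_pos ε).le, ENNReal.ofReal_mul (exp_pos ρ₀).le]
  rw [hS, hrhs]
  calc (∫⁻ x in f ⁻¹' s, g x z ∂pri) / (∫⁻ x, g x z ∂pri)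
      ≤ c₀ := ENNReal.div_le_of_le_mul hnum
    _ = ENNReal.ofReal (exp ε) * pri (f ⁻¹' s) := hc₀
    _ ≤ ENNReal.ofReal (exp ε) * (ENNReal.ofReal (exp ρ₀) * uniformSphere k s) :=
        mul_le_mul_right (hdens s hsm) _
    _ ≤ ENNReal.ofReal (exp ε)
        * (ENNReal.ofReal (exp ρ₀) * ENNReal.ofReal ((1 - a ^ 2) ^ ((k : ℝ) / 2))) :=
        mul_le_mul_right (mul_le_mul_right hσ _) _
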